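/- Theorem 5 (ρ_{S3} for 2-D mapping): let N = 2M with M ≥ 3, let σ be a uniformly random permutation of Fin N, X_i = u (σ i), and define the symbol energy E_w = X_{2w}² + X_{2w+1}² for w : Fin M. Then for any three pairwise distinct symbol times w, w', w'', E[E_w · E_{w'} · E_{w''}] = 8ρ₃, where ρ₃ = (N²·m₂³ − 3N·m₂·m₄ + 2·m₆)/((N − 1)(N − 2)). -/

import Mathlib

open Finset


open Finset

variable {α : Type*} [Fintype α] [DecidableEq α]

lemma triple_offdiag_sum (f : α → ℝ) :
    ∑ a : α, ∑ b ∈ univ.erase a, ∑ c ∈ (univ.erase a).erase b, f a * f b * f c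
      = (∑ i, f i) ^ 3 - 3 * (∑ i, f i) * (∑ i, f i ^ 2) + 2 * ∑ i, f i ^ 3 := by
  set A := ∑ i, f i with hA
  set B := ∑ i, f i ^ 2 with hB
  set C := ∑ i, f i ^ 3 with hC
  have h1 : ∀ a : α, ∀ b ∈ univ.erase a,
      ∑ c ∈ (univ.erase a).erase b, f a * f b * f c
        = f a * f b * (A - f a - f b) := by
    intro a b hb
    rw [← Finset.mul_sum, Finset.sum_erase_eq_sub hb, Finset.sum_erase_eq_sub (mem_univ a)]
  have h2 : ∀ a : α, ∑ b ∈ univ.erase a, f a * f b * (A - f a - f b)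
      = f a * ((A - f a) * (A - f a) - (B - f a ^ 2)) := by
    intro a
    have e1 : ∑ b ∈ univ.erase a, f b = A - f a := Finset.sum_erase_eq_sub (mem_univ a)
    have e2 : ∑ b ∈ univ.erase a, f b ^ 2 = B - f a ^ 2 := Finset.sum_erase_eq_sub (mem_univ a)
    have : ∀ b, f a * f b * (A - f a - f b)
        = f a * ((A - f a) * f b - f b ^ 2) := by intro b; ring
    simp_rw [this, ← Finset.mul_sum, Finset.sum_sub_distrib, ← Finset.mul_sum, e1, e2]
  calc ∑ a : α, ∑ b ∈ univ.erase a, ∑ c ∈ (univ.erase a).erase b, f a * f b * f c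
      = ∑ a : α, f a * ((A - f a) * (A - f a) - (B - f a ^ 2)) := by
        refine Finset.sum_congr rfl fun a _ => ?_
        rw [Finset.sum_congr rfl (h1 a), h2 a]
    _ = ∑ a : α, (f a * (A^2 - B) - 2 * A * f a ^ 2 + 2 * f a ^ 3) := by
        refine Finset.sum_congr rfl fun a _ => ?_; ring
    _ = A * (A^2 - B) - 2 * A * B + 2 * C := by
        rw [Finset.sum_add_distrib, Finset.sum_sub_distrib, ← Finset.sum_mul,
          ← Finset.mul_sum, ← Finset.mul_sum, ← hA, ← hB, ← hC]
    _ = A ^ 3 - 3 * A * B + 2 * C := by ring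

lemma perm_sum_comp (f : α → ℝ) (τ : Equiv.Perm α) (a b c : α) :
    ∑ σ : Equiv.Perm α, f (σ (τ a)) * f (σ (τ b)) * f (σ (τ c))
      = ∑ σ : Equiv.Perm α, f (σ a) * f (σ b) * f (σ c) := by
  exact Fintype.sum_equiv (Equiv.mulRight τ) _ _ (fun σ => by
    simp [Equiv.Perm.mul_apply])

set_option linter.unusedSectionVars false in
lemma exists_perm_triple (a b c a' b' c' : α)
    (hab : a ≠ b) (hac : a ≠ c) (hbc : b ≠ c)
    (hab' : a' ≠ b') (hac' : a' ≠ c') (hbc' : b' ≠ c') :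
    ∃ τ : Equiv.Perm α, τ a = a' ∧ τ b = b' ∧ τ c = c' := by
  classical
  set τ1 := Equiv.swap a a' with hτ1
  have h1a : τ1 a = a' := Equiv.swap_apply_left a a'
  set b1 := τ1 b with hb1def
  set c1 := τ1 c with hc1def
  have hb1a' : b1 ≠ a' := fun h => hab (τ1.injective (by rw [h1a, ← h]))
  have hc1a' : c1 ≠ a' := fun h => hac (τ1.injective (by rw [h1a, ← h]))
  have hb1c1 : b1 ≠ c1 := fun h => hbc (τ1.injective h)
  set τ2 := Equiv.swap b1 b' with hτ2
  have h2a : τ2 a' = a' := Equiv.swap_apply_of_ne_of_ne hb1a'.symm hab'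
  have h2b : τ2 b1 = b' := Equiv.swap_apply_left b1 b'
  set c2 := τ2 c1 with hc2def
  have hc2a' : c2 ≠ a' := fun h => hc1a' (τ2.injective (by rw [h2a, ← h]))
  have hc2b' : c2 ≠ b' := fun h => hb1c1 (τ2.injective (by rw [h2b, ← h])).symm
  set τ3 := Equiv.swap c2 c' with hτ3
  have h3a : τ3 a' = a' := Equiv.swap_apply_of_ne_of_ne hc2a'.symm hac'
  have h3b : τ3 b' = b' := Equiv.swap_apply_of_ne_of_ne hc2b'.symm hbc'
  refine ⟨τ3 * τ2 * τ1, ?_, ?_, ?_⟩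
  · simp [Equiv.Perm.mul_apply, h1a, h2a, h3a]
  · simp [Equiv.Perm.mul_apply, ← hb1def, h2b, h3b]
  · simp [Equiv.Perm.mul_apply, ← hc1def, ← hc2def, τ3]

lemma perm_triple_sum_eq (f : α → ℝ) (a b c : α)
    (hab : a ≠ b) (hac : a ≠ c) (hbc : b ≠ c) :
    ((Fintype.card α : ℝ) * ((Fintype.card α : ℝ) - 1) * ((Fintype.card α : ℝ) - 2)) *
      ∑ σ : Equiv.Perm α, f (σ a) * f (σ b) * f (σ c)
    = (Fintype.card (Equiv.Perm α) : ℝ) *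
      ((∑ i, f i) ^ 3 - 3 * (∑ i, f i) * (∑ i, f i ^ 2) + 2 * ∑ i, f i ^ 3) := by
  classical
  set S := ∑ σ : Equiv.Perm α, f (σ a) * f (σ b) * f (σ c) with hS
  have hcard : 3 ≤ Fintype.card α := by
    have h : ({a, b, c} : Finset α).card = 3 := by
      rw [Finset.card_insert_of_notMem (by simp [hab, hac]),
        Finset.card_insert_of_notMem (by simp [hbc]), Finset.card_singleton]
    calc 3 = ({a, b, c} : Finset α).card := h.symm
      _ ≤ Fintype.card α := Finset.card_le_univ _
  have inv : ∀ a' b' c' : α, a' ≠ b' → a' ≠ c' → b' ≠ c' →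
      ∑ σ : Equiv.Perm α, f (σ a') * f (σ b') * f (σ c') = S := by
    intro a' b' c' hab' hac' hbc'
    obtain ⟨τ, ha, hb, hc⟩ := exists_perm_triple a b c a' b' c' hab hac hbc hab' hac' hbc'
    rw [hS, ← perm_sum_comp f τ a b c, ha, hb, hc]
  have count : ∑ a' : α, ∑ b' ∈ univ.erase a', ∑ c' ∈ (univ.erase a').erase b', S
      = ((Fintype.card α : ℝ) * ((Fintype.card α : ℝ) - 1) *
          ((Fintype.card α : ℝ) - 2)) * S := by
    have e1 : ∀ a' : α, ∀ b' ∈ univ.erase a',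
        ∑ c' ∈ (univ.erase a').erase b', S = ((Fintype.card α - 2 : ℕ) : ℝ) * S := by
      intro a' b' hb'
      have h : ((univ.erase a').erase b').card = Fintype.card α - 2 := by
        rw [Finset.card_erase_of_mem hb', Finset.card_erase_of_mem (mem_univ a'),
          Finset.card_univ]
        omega
      rw [Finset.sum_const, h, nsmul_eq_mul]
    calc ∑ a' : α, ∑ b' ∈ univ.erase a', ∑ c' ∈ (univ.erase a').erase b', S
        = ∑ a' : α, ∑ b' ∈ univ.erase a', ((Fintype.card α - 2 : ℕ) : ℝ) * S :=
          Finset.sum_congr rfl fun a' _ => Finset.sum_congr rfl (e1 a')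
      _ = ∑ a' : α, ((Fintype.card α - 1 : ℕ) : ℝ) * (((Fintype.card α - 2 : ℕ) : ℝ) * S) := by
          refine Finset.sum_congr rfl fun a' _ => ?_
          rw [Finset.sum_const, Finset.card_erase_of_mem (mem_univ a'),
            Finset.card_univ, nsmul_eq_mul]
      _ = (Fintype.card α : ℝ) * (((Fintype.card α - 1 : ℕ) : ℝ) *
            (((Fintype.card α - 2 : ℕ) : ℝ) * S)) := by
          rw [Finset.sum_const, Finset.card_univ, nsmul_eq_mul]
      _ = _ := by
          rw [Nat.cast_sub (by omega), Nat.cast_sub (by omega)]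
          push_cast
          ring
  have resum : ∑ a' : α, ∑ b' ∈ univ.erase a', ∑ c' ∈ (univ.erase a').erase b', S
      = (Fintype.card (Equiv.Perm α) : ℝ) *
        ((∑ i, f i) ^ 3 - 3 * (∑ i, f i) * (∑ i, f i ^ 2) + 2 * ∑ i, f i ^ 3) := by
    have step1 : ∑ a' : α, ∑ b' ∈ univ.erase a', ∑ c' ∈ (univ.erase a').erase b', S
        = ∑ a' : α, ∑ b' ∈ univ.erase a', ∑ c' ∈ (univ.erase a').erase b',
            ∑ σ : Equiv.Perm α, f (σ a') * f (σ b') * f (σ c') := by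
      refine Finset.sum_congr rfl fun a' _ => Finset.sum_congr rfl fun b' hb' =>
        Finset.sum_congr rfl fun c' hc' => ?_
      have h1 : a' ≠ b' := (Finset.ne_of_mem_erase hb').symm
      have h2 : c' ≠ b' := Finset.ne_of_mem_erase hc'
      have h3 : c' ≠ a' := Finset.ne_of_mem_erase (Finset.mem_of_mem_erase hc')
      exact (inv a' b' c' h1 h3.symm h2.symm).symm
    have step2 : ∑ a' : α, ∑ b' ∈ univ.erase a', ∑ c' ∈ (univ.erase a').erase b',
            ∑ σ : Equiv.Perm α, f (σ a') * f (σ b') * f (σ c')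
        = ∑ σ : Equiv.Perm α, ∑ a' : α, ∑ b' ∈ univ.erase a',
            ∑ c' ∈ (univ.erase a').erase b', f (σ a') * f (σ b') * f (σ c') := by
      calc ∑ a' : α, ∑ b' ∈ univ.erase a', ∑ c' ∈ (univ.erase a').erase b',
              ∑ σ : Equiv.Perm α, f (σ a') * f (σ b') * f (σ c')
          = ∑ a' : α, ∑ b' ∈ univ.erase a', ∑ σ : Equiv.Perm α,
              ∑ c' ∈ (univ.erase a').erase b', f (σ a') * f (σ b') * f (σ c') :=
            Finset.sum_congr rfl fun a' _ => Finset.sum_congr rfl fun b' _ =>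
              Finset.sum_comm
        _ = ∑ a' : α, ∑ σ : Equiv.Perm α, ∑ b' ∈ univ.erase a',
              ∑ c' ∈ (univ.erase a').erase b', f (σ a') * f (σ b') * f (σ c') :=
            Finset.sum_congr rfl fun a' _ => Finset.sum_comm
        _ = ∑ σ : Equiv.Perm α, ∑ a' : α, ∑ b' ∈ univ.erase a',
              ∑ c' ∈ (univ.erase a').erase b', f (σ a') * f (σ b') * f (σ c') :=
            Finset.sum_comm
    have step3 : ∀ σ : Equiv.Perm α,
        ∑ a' : α, ∑ b' ∈ univ.erase a', ∑ c' ∈ (univ.erase a').erase b',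
            f (σ a') * f (σ b') * f (σ c')
        = (∑ i, f i) ^ 3 - 3 * (∑ i, f i) * (∑ i, f i ^ 2) + 2 * ∑ i, f i ^ 3 := by
      intro σ
      have := triple_offdiag_sum (fun i => f (σ i))
      rw [this, Equiv.sum_comp σ f, Equiv.sum_comp σ (fun i => f i ^ 2),
        Equiv.sum_comp σ (fun i => f i ^ 3)]
    rw [step1, step2]
    rw [Finset.sum_congr rfl fun σ _ => step3 σ, Finset.sum_const, Finset.card_univ,
      nsmul_eq_mul]
  rw [← count, resum]



/-- Expectation of a real-valued random variable on the finite probability space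
`Equiv.Perm (Fin N)` equipped with the uniform probability measure. -/
noncomputable def permExpect (N : ℕ) (f : Equiv.Perm (Fin N) → ℝ) : ℝ :=
  (∑ σ : Equiv.Perm (Fin N), f σ) / (Fintype.card (Equiv.Perm (Fin N)) : ℝ)

/-- Empirical `k`-th moment of the amplitude block `u`. -/
noncomputable def empMoment (N : ℕ) (u : Fin N → ℝ) (k : ℕ) : ℝ :=
  (1 / (N : ℝ)) * ∑ i : Fin N, (u i) ^ k

/-- Symbol energy under 2-D mapping: `E_w = X_{2w}² + X_{2w+1}²` with `X_i = u (σ i)`,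
for a block of length `N = 2M`. -/
noncomputable def energy2D (M : ℕ) (u : Fin (2 * M) → ℝ)
    (σ : Equiv.Perm (Fin (2 * M))) (w : Fin M) : ℝ :=
  (u (σ ⟨2 * w.val, by have := w.isLt; omega⟩)) ^ 2
    + (u (σ ⟨2 * w.val + 1, by have := w.isLt; omega⟩)) ^ 2

set_option maxHeartbeats 1600000 in
/-- Theorem 5 (ρ_{S3} for 2-D mapping): for `N = 2M`, `M ≥ 3`, and pairwise distinct
symbol times `w, w', w''`, `E[E_w·E_{w'}·E_{w''}] = 8ρ₃` with
`ρ₃ = (N²·m₂³ − 3N·m₂·m₄ + 2·m₆)/((N−1)(N−2))`. -/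
theorem rhoS3_twoD (M : ℕ) (hM : 3 ≤ M) (u : Fin (2 * M) → ℝ)
    (w w' w'' : Fin M) (h1 : w ≠ w') (h2 : w ≠ w'') (h3 : w' ≠ w'') :
    permExpect (2 * M)
        (fun σ => energy2D M u σ w * energy2D M u σ w' * energy2D M u σ w'')
      = 8 * ((((2 * M : ℕ) : ℝ) ^ 2 * (empMoment (2 * M) u 2) ^ 3
              - 3 * ((2 * M : ℕ) : ℝ) * empMoment (2 * M) u 2 * empMoment (2 * M) u 4
              + 2 * empMoment (2 * M) u 6)
            / ((((2 * M : ℕ) : ℝ) - 1) * (((2 * M : ℕ) : ℝ) - 2))) := by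
  
  classical
  have hK : (0:ℝ) < (Fintype.card (Equiv.Perm (Fin (2 * M))) : ℝ) := by
    exact_mod_cast Fintype.card_pos
  set n : ℝ := ((2 * M : ℕ) : ℝ) with hn
  have hn6 : (6:ℝ) ≤ n := by
    rw [hn]; exact_mod_cast (by omega : (6:ℕ) ≤ 2 * M)
  have hn0 : n ≠ 0 := by linarith
  have hn1 : n - 1 ≠ 0 := by linarith
  have hn2 : n - 2 ≠ 0 := by linarith
  have hc : n * (n - 1) * (n - 2) ≠ 0 := by
    exact mul_ne_zero (mul_ne_zero hn0 hn1) hn2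
  set f : Fin (2 * M) → ℝ := fun i => u i ^ 2 with hf
  set D : ℝ := (∑ i, f i) ^ 3 - 3 * (∑ i, f i) * (∑ i, f i ^ 2) + 2 * ∑ i, f i ^ 3
    with hD
  set K : ℝ := (Fintype.card (Equiv.Perm (Fin (2 * M))) : ℝ) with hKdef
  have key : ∀ x y z : Fin (2 * M), x ≠ y → x ≠ z → y ≠ z →
      ∑ σ : Equiv.Perm (Fin (2 * M)), f (σ x) * f (σ y) * f (σ z)
        = K * D / (n * (n - 1) * (n - 2)) := by
    intro x y z hxy hxz hyz
    have h := perm_triple_sum_eq f x y z hxy hxz hyz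
    rw [Fintype.card_fin] at h
    rw [eq_div_iff hc]
    rw [← hn, ← hD, ← hKdef] at h
    linarith [h]
  -- the six time indices
  obtain ⟨i1, hi1⟩ : ∃ i : Fin (2 * M), (i : ℕ) = 2 * w.val :=
    ⟨⟨2 * w.val, by have := w.isLt; omega⟩, rfl⟩
  obtain ⟨i2, hi2⟩ : ∃ i : Fin (2 * M), (i : ℕ) = 2 * w.val + 1 :=
    ⟨⟨2 * w.val + 1, by have := w.isLt; omega⟩, rfl⟩
  obtain ⟨j1, hj1⟩ : ∃ i : Fin (2 * M), (i : ℕ) = 2 * w'.val :=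
    ⟨⟨2 * w'.val, by have := w'.isLt; omega⟩, rfl⟩
  obtain ⟨j2, hj2⟩ : ∃ i : Fin (2 * M), (i : ℕ) = 2 * w'.val + 1 :=
    ⟨⟨2 * w'.val + 1, by have := w'.isLt; omega⟩, rfl⟩
  obtain ⟨k1, hk1⟩ : ∃ i : Fin (2 * M), (i : ℕ) = 2 * w''.val :=
    ⟨⟨2 * w''.val, by have := w''.isLt; omega⟩, rfl⟩
  obtain ⟨k2, hk2⟩ : ∃ i : Fin (2 * M), (i : ℕ) = 2 * w''.val + 1 :=
    ⟨⟨2 * w''.val + 1, by have := w''.isLt; omega⟩, rfl⟩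
  have hw1 : w.val ≠ w'.val := fun h => h1 (Fin.ext h)
  have hw2 : w.val ≠ w''.val := fun h => h2 (Fin.ext h)
  have hw3 : w'.val ≠ w''.val := fun h => h3 (Fin.ext h)
  have hne : ∀ x y : Fin (2 * M), x.val ≠ y.val → x ≠ y :=
    fun x y h hxy => h (congrArg Fin.val hxy)
  have hij11 : i1 ≠ j1 := hne _ _ (by rw [hi1, hj1]; omega)
  have hij12 : i1 ≠ j2 := hne _ _ (by rw [hi1, hj2]; omega)
  have hij21 : i2 ≠ j1 := hne _ _ (by rw [hi2, hj1]; omega)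
  have hij22 : i2 ≠ j2 := hne _ _ (by rw [hi2, hj2]; omega)
  have hik11 : i1 ≠ k1 := hne _ _ (by rw [hi1, hk1]; omega)
  have hik12 : i1 ≠ k2 := hne _ _ (by rw [hi1, hk2]; omega)
  have hik21 : i2 ≠ k1 := hne _ _ (by rw [hi2, hk1]; omega)
  have hik22 : i2 ≠ k2 := hne _ _ (by rw [hi2, hk2]; omega)
  have hjk11 : j1 ≠ k1 := hne _ _ (by rw [hj1, hk1]; omega)
  have hjk12 : j1 ≠ k2 := hne _ _ (by rw [hj1, hk2]; omega)
  have hjk21 : j2 ≠ k1 := hne _ _ (by rw [hj2, hk1]; omega)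
  have hjk22 : j2 ≠ k2 := hne _ _ (by rw [hj2, hk2]; omega)
  have hE : ∀ σ : Equiv.Perm (Fin (2 * M)),
      energy2D M u σ w * energy2D M u σ w' * energy2D M u σ w''
        = f (σ i1) * f (σ j1) * f (σ k1) + f (σ i1) * f (σ j1) * f (σ k2)
        + f (σ i1) * f (σ j2) * f (σ k1) + f (σ i1) * f (σ j2) * f (σ k2)
        + f (σ i2) * f (σ j1) * f (σ k1) + f (σ i2) * f (σ j1) * f (σ k2)
        + f (σ i2) * f (σ j2) * f (σ k1) + f (σ i2) * f (σ j2) * f (σ k2) := by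
    intro σ
    have ei1 : (⟨2 * w.val, by have := w.isLt; omega⟩ : Fin (2 * M)) = i1 :=
      Fin.ext hi1.symm
    have ei2 : (⟨2 * w.val + 1, by have := w.isLt; omega⟩ : Fin (2 * M)) = i2 :=
      Fin.ext hi2.symm
    have ej1 : (⟨2 * w'.val, by have := w'.isLt; omega⟩ : Fin (2 * M)) = j1 :=
      Fin.ext hj1.symm
    have ej2 : (⟨2 * w'.val + 1, by have := w'.isLt; omega⟩ : Fin (2 * M)) = j2 :=
      Fin.ext hj2.symm
    have ek1 : (⟨2 * w''.val, by have := w''.isLt; omega⟩ : Fin (2 * M)) = k1 :=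
      Fin.ext hk1.symm
    have ek2 : (⟨2 * w''.val + 1, by have := w''.isLt; omega⟩ : Fin (2 * M)) = k2 :=
      Fin.ext hk2.symm
    simp only [energy2D, ei1, ei2, ej1, ej2, ek1, ek2, hf]
    ring
  have hsum : ∑ σ : Equiv.Perm (Fin (2 * M)),
      energy2D M u σ w * energy2D M u σ w' * energy2D M u σ w''
        = 8 * (K * D / (n * (n - 1) * (n - 2))) := by
    rw [Finset.sum_congr rfl fun σ _ => hE σ]
    simp only [Finset.sum_add_distrib]
    rw [key i1 j1 k1 hij11 hik11 hjk11, key i1 j1 k2 hij11 hik12 hjk12,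
      key i1 j2 k1 hij12 hik11 hjk21, key i1 j2 k2 hij12 hik12 hjk22,
      key i2 j1 k1 hij21 hik21 hjk11, key i2 j1 k2 hij21 hik22 hjk12,
      key i2 j2 k1 hij22 hik21 hjk21, key i2 j2 k2 hij22 hik22 hjk22]
    ring
  rw [permExpect, hsum, ← hKdef]
  have hK0 : K ≠ 0 := ne_of_gt hK
  -- moments in terms of power sums
  have hm2 : empMoment (2 * M) u 2 = (1 / n) * ∑ i, f i := by
    rw [empMoment, ← hn]
  have hm4 : empMoment (2 * M) u 4 = (1 / n) * ∑ i, f i ^ 2 := by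
    rw [empMoment, ← hn]
    congr 1
    refine Finset.sum_congr rfl fun i _ => ?_
    simp only [hf]; ring
  have hm6 : empMoment (2 * M) u 6 = (1 / n) * ∑ i, f i ^ 3 := by
    rw [empMoment, ← hn]
    congr 1
    refine Finset.sum_congr rfl fun i _ => ?_
    simp only [hf]; ring
  rw [hm2, hm4, hm6, hD]
  field_simp
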